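/- Let {M_c}_{c∈C} be a POVM on ℂ^N indexed by a finite set C, and let ρ, σ be density matrices on ℂ^N. Then the square root of the quantum fidelity is bounded by the classical Bhattacharyya coefficient of the induced outcome distributions: Tr √(√ρ σ √ρ) ≤ Σ_{c∈C} √(Tr[M_c ρ] · Tr[M_c σ]). -/

import Mathlib

open Matrix
open scoped ComplexOrder

/-- Positive-semidefinite square root of a matrix (zero if not PSD). -/
noncomputable def psdSqrt {N : ℕ} (A : Matrix (Fin N) (Fin N) ℂ) :
    Matrix (Fin N) (Fin N) ℂ :=
  open scoped Classical in
  if h : A.PosSemidef then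
    h.1.eigenvectorUnitary.1 * diagonal ((↑) ∘ (√·) ∘ h.1.eigenvalues) *
      (star h.1.eigenvectorUnitary : Matrix (Fin N) (Fin N) ℂ)
  else 0

/-- Root fidelity `Tr √(√ρ σ √ρ)`. -/
noncomputable def rootFidelity {N : ℕ} (ρ σ : Matrix (Fin N) (Fin N) ℂ) : ℝ :=
  (psdSqrt (psdSqrt ρ * σ * psdSqrt ρ)).trace.re

/-- Fidelity `F(ρ,σ) = (Tr √(√ρ σ √ρ))²`. -/
noncomputable def fidelity {N : ℕ} (ρ σ : Matrix (Fin N) (Fin N) ℂ) : ℝ :=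
  (rootFidelity ρ σ) ^ 2

/-- A density matrix: positive semidefinite with trace one. -/
def IsDensityMatrix {N : ℕ} (ρ : Matrix (Fin N) (Fin N) ℂ) : Prop :=
  ρ.PosSemidef ∧ ρ.trace = 1

/-- A POVM: a family of PSD matrices summing to the identity. -/
def IsPOVM {N : ℕ} {C : Type*} [Fintype C] (M : C → Matrix (Fin N) (Fin N) ℂ) : Prop :=
  (∀ c, (M c).PosSemidef) ∧ ∑ c, M c = 1

/-- A Kraus family: `∑ Eₖᴴ Eₖ = I`. -/
def IsKrausFamily {N : ℕ} {K : Type*} [Fintype K] (E : K → Matrix (Fin N) (Fin N) ℂ) : Prop :=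
  ∑ k, (E k)ᴴ * E k = 1

/-- The quantum channel associated with a Kraus family. -/
noncomputable def channel {N : ℕ} {K : Type*} [Fintype K]
    (E : K → Matrix (Fin N) (Fin N) ℂ) (σ : Matrix (Fin N) (Fin N) ℂ) :
    Matrix (Fin N) (Fin N) ℂ :=
  ∑ k, E k * σ * (E k)ᴴ

/-- Minimum of `f` over all labels distinct from `cstar` (needs `|C| ≥ 2`). -/
noncomputable def minErase {C : Type*} [Fintype C] [DecidableEq C] {α : Type*} [LinearOrder α]
    (cstar : C) (h : 1 < Fintype.card C) (f : C → α) : α :=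
  (Finset.univ.erase cstar).inf'
    ((Finset.erase_nonempty (Finset.mem_univ cstar)).mpr
      (Finset.one_lt_card_iff_nontrivial.mp (by simpa [Finset.card_univ] using h))) f

noncomputable def Matrix.PosSemidef.sqrt {N : ℕ} {A : Matrix (Fin N) (Fin N) ℂ}
    (h : A.PosSemidef) : Matrix (Fin N) (Fin N) ℂ :=
  h.1.eigenvectorUnitary.1 * diagonal (RCLike.ofReal ∘ Real.sqrt ∘ h.1.eigenvalues) *
    (star h.1.eigenvectorUnitary : Matrix (Fin N) (Fin N) ℂ)

lemma Matrix.PosSemidef.posSemidef_sqrt {N : ℕ} {A : Matrix (Fin N) (Fin N) ℂ}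
    (h : A.PosSemidef) : h.sqrt.PosSemidef := by
  unfold Matrix.PosSemidef.sqrt
  have hD : (diagonal (RCLike.ofReal ∘ Real.sqrt ∘ h.1.eigenvalues) :
      Matrix (Fin N) (Fin N) ℂ).PosSemidef :=
    Matrix.posSemidef_diagonal_iff.mpr (fun i => RCLike.ofReal_nonneg.mpr (Real.sqrt_nonneg _))
  have := hD.mul_mul_conjTranspose_same (h.1.eigenvectorUnitary.1)
  exact this

lemma Matrix.PosSemidef.sqrt_mul_self {N : ℕ} {A : Matrix (Fin N) (Fin N) ℂ}
    (h : A.PosSemidef) : h.sqrt * h.sqrt = A := by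
  unfold Matrix.PosSemidef.sqrt
  have hU : (star h.1.eigenvectorUnitary.1) * h.1.eigenvectorUnitary.1 = 1 :=
    Unitary.coe_star_mul_self _
  have hs := h.1.spectral_theorem
  rw [Unitary.conjStarAlgAut_apply] at hs
  change _ = A
  conv_rhs => rw [hs]
  change h.1.eigenvectorUnitary.1 * diagonal (RCLike.ofReal ∘ Real.sqrt ∘ h.1.eigenvalues) *
      star h.1.eigenvectorUnitary.1 * (h.1.eigenvectorUnitary.1 *
      diagonal (RCLike.ofReal ∘ Real.sqrt ∘ h.1.eigenvalues) * star h.1.eigenvectorUnitary.1) = _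
  calc _ = h.1.eigenvectorUnitary.1 * diagonal (RCLike.ofReal ∘ Real.sqrt ∘ h.1.eigenvalues) *
        (star h.1.eigenvectorUnitary.1 * h.1.eigenvectorUnitary.1) *
        diagonal (RCLike.ofReal ∘ Real.sqrt ∘ h.1.eigenvalues) * star h.1.eigenvectorUnitary.1 := by
        noncomm_ring
    _ = h.1.eigenvectorUnitary.1 * (diagonal (RCLike.ofReal ∘ Real.sqrt ∘ h.1.eigenvalues) *
        diagonal (RCLike.ofReal ∘ Real.sqrt ∘ h.1.eigenvalues)) * star h.1.eigenvectorUnitary.1 := by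
        rw [hU]; noncomm_ring
    _ = _ := by
        rw [diagonal_mul_diagonal]; congr 3; funext i
        simp only [Function.comp_apply]
        rw [← RCLike.ofReal_mul, Real.mul_self_sqrt (h.eigenvalues_nonneg i)]

noncomputable def matVec {N : ℕ} (X : Matrix (Fin N) (Fin N) ℂ) :
    EuclideanSpace ℂ (Fin N × Fin N) := WithLp.toLp 2 (fun p : Fin N × Fin N => X p.1 p.2)

lemma trace_conjTranspose_mul_eq_inner {N : ℕ} (X Y : Matrix (Fin N) (Fin N) ℂ) :
    (Xᴴ * Y).trace = inner (𝕜 := ℂ) (matVec X) (matVec Y) := by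
  rw [Matrix.trace]
  simp only [Matrix.diag, Matrix.mul_apply, Matrix.conjTranspose_apply,
    PiLp.inner_apply, RCLike.inner_apply, matVec, Fintype.sum_prod_type]
  rw [Finset.sum_comm]
  simp [mul_comm]

lemma trace_conjTranspose_mul_self_re {N : ℕ} (X : Matrix (Fin N) (Fin N) ℂ) :
    (Xᴴ * X).trace.re = ‖matVec X‖ ^ 2 := by
  have h := trace_conjTranspose_mul_eq_inner X X
  rw [inner_self_eq_norm_sq_to_K (𝕜 := ℂ)] at h
  rw [h]; norm_cast

lemma trace_conjTranspose_mul_self_re_nonneg {N : ℕ} (X : Matrix (Fin N) (Fin N) ℂ) :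
    0 ≤ (Xᴴ * X).trace.re := by
  rw [trace_conjTranspose_mul_self_re]; positivity

lemma sqrt_trace_conjTranspose_mul_self {N : ℕ} (X : Matrix (Fin N) (Fin N) ℂ) :
    Real.sqrt ((Xᴴ * X).trace.re) = ‖matVec X‖ := by
  rw [trace_conjTranspose_mul_self_re, Real.sqrt_sq (norm_nonneg _)]

lemma trace_cauchy_schwarz {N : ℕ} (X Y : Matrix (Fin N) (Fin N) ℂ) :
    ((Xᴴ * Y).trace).re ≤
      Real.sqrt ((Xᴴ * X).trace.re) * Real.sqrt ((Yᴴ * Y).trace.re) := by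
  rw [trace_conjTranspose_mul_eq_inner, sqrt_trace_conjTranspose_mul_self,
    sqrt_trace_conjTranspose_mul_self]
  calc (inner (𝕜 := ℂ) (matVec X) (matVec Y)).re
      ≤ ‖inner (𝕜 := ℂ) (matVec X) (matVec Y)‖ := Complex.re_le_norm _
    _ ≤ ‖matVec X‖ * ‖matVec Y‖ := norm_inner_le_norm _ _

/-- Polar decomposition: every square complex matrix is `U * √(AᴴA)` with `U` unitary. -/
lemma exists_unitary_polar {N : ℕ} (A : Matrix (Fin N) (Fin N) ℂ) :
    ∃ U : Matrix (Fin N) (Fin N) ℂ, Uᴴ * U = 1 ∧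
      A = U * (Matrix.posSemidef_conjTranspose_mul_self A).sqrt := by
  classical
  set hP := Matrix.posSemidef_conjTranspose_mul_self A with hPdef
  set W : Matrix (Fin N) (Fin N) ℂ := (hP.1.eigenvectorUnitary : Matrix (Fin N) (Fin N) ℂ) with hWdef
  have hWmem : W ∈ Matrix.unitaryGroup (Fin N) ℂ := (Matrix.IsHermitian.eigenvectorUnitary hP.1).2
  have hWW : W * Wᴴ = 1 := by
    have := Matrix.mem_unitaryGroup_iff.mp hWmem
    simpa [Matrix.star_eq_conjTranspose] using this
  have hWW' : Wᴴ * W = 1 := mul_eq_one_comm.mp hWW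
  set d := hP.1.eigenvalues with hddef
  have hd : ∀ i, 0 ≤ d i := hP.eigenvalues_nonneg
  set B := A * W with hBdef
  have key : Bᴴ * B = Matrix.diagonal (RCLike.ofReal ∘ d) := by
    have h := hP.1.conjStarAlgAut_star_eigenvectorUnitary
    calc Bᴴ * B = Wᴴ * (Aᴴ * A) * W := by
          rw [hBdef, Matrix.conjTranspose_mul]; noncomm_ring
      _ = Matrix.diagonal (RCLike.ofReal ∘ d) := by
          simpa [Matrix.star_eq_conjTranspose, Unitary.conjStarAlgAut_star_apply] using h
  have key_entry : ∀ i j, (∑ k, (starRingEnd ℂ) (B k i) * B k j)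
      = if i = j then (d i : ℂ) else 0 := by
    intro i j
    have := congrFun (congrFun key i) j
    simpa [Matrix.mul_apply, Matrix.conjTranspose_apply, Matrix.diagonal_apply] using this
  have h0 : ∀ i, d i = 0 → ∀ k, B k i = 0 := by
    intro i hdi k
    have h := key_entry i i
    rw [if_pos rfl, hdi] at h
    have h2 : ∑ k, Complex.normSq (B k i) = 0 := by
      have := congrArg Complex.re h
      simpa [← Complex.normSq_eq_conj_mul_self, Complex.ofReal_sum] using this
    have h3 := (Finset.sum_eq_zero_iff_of_nonneg
      (fun k _ => Complex.normSq_nonneg (B k i))).mp h2 k (Finset.mem_univ k)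
    exact Complex.normSq_eq_zero.mp h3
  set v : Fin N → EuclideanSpace ℂ (Fin N) :=
    fun i => WithLp.toLp 2 (((Real.sqrt (d i) : ℂ))⁻¹ • (fun k => B k i)) with hvdef
  set s : Set (Fin N) := {i | d i ≠ 0} with hsdef
  have horth : Orthonormal ℂ (s.restrict v) := by
    rw [orthonormal_iff_ite]
    rintro ⟨i, hi⟩ ⟨j, hj⟩
    have hinner : inner (𝕜 := ℂ) (v i) (v j)
        = ((Real.sqrt (d i) : ℂ))⁻¹ * ((Real.sqrt (d j) : ℂ))⁻¹
          * ∑ k, (starRingEnd ℂ) (B k i) * B k j := by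
      simp only [hvdef, PiLp.inner_apply, RCLike.inner_apply, PiLp.smul_apply, Pi.smul_apply,
        smul_eq_mul, _root_.map_mul, map_inv₀, Complex.conj_ofReal, Finset.mul_sum]
      congr 1; ext k; ring
    change inner ℂ (v i) (v j) = _; rw [hinner, key_entry]
    by_cases hij : i = j
    · subst hij
      have hdi : d i ≠ 0 := hi
      have hss : (Real.sqrt (d i) : ℂ) * (Real.sqrt (d i) : ℂ) = (d i : ℂ) := by
        rw [← Complex.ofReal_mul, Real.mul_self_sqrt (hd i)]
      rw [if_pos rfl, if_pos (Subtype.ext rfl), ← mul_inv, hss]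
      exact inv_mul_cancel₀ (Complex.ofReal_ne_zero.mpr hdi)
    · rw [if_neg hij, if_neg (by simpa using hij), mul_zero]
  obtain ⟨b, hb⟩ := horth.exists_orthonormalBasis_extension_of_card_eq
    (by simp [finrank_euclideanSpace])
  set U' : Matrix (Fin N) (Fin N) ℂ := Matrix.of (fun k i => b i k) with hU'def
  have hU'o : U'ᴴ * U' = 1 := by
    ext i j
    have := (orthonormal_iff_ite (𝕜 := ℂ)).mp b.orthonormal i j
    simp only [PiLp.inner_apply, RCLike.inner_apply] at this
    simp only [Matrix.mul_apply, Matrix.conjTranspose_apply, hU'def, Matrix.of_apply,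
      Matrix.one_apply]
    rw [← this]; refine Finset.sum_congr rfl (fun x _ => ?_); rw [mul_comm]; rfl
  have hBU : B = U' * Matrix.diagonal (RCLike.ofReal ∘ Real.sqrt ∘ d) := by
    ext k i
    rw [Matrix.mul_diagonal]
    by_cases hdi : d i = 0
    · simp [h0 i hdi k, Function.comp, hdi]
    · have hbi := hb i hdi
      have hs : Real.sqrt (d i) ≠ 0 := by
        refine Real.sqrt_ne_zero'.mpr (lt_of_le_of_ne (hd i) (Ne.symm hdi))
      have : U' k i = ((Real.sqrt (d i) : ℂ))⁻¹ * B k i := by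
        rw [hU'def]
        show b i k = _
        rw [hbi]
        simp [hvdef]
      rw [this, Function.comp_apply, Function.comp_apply]
      have hsc : (Real.sqrt (d i) : ℂ) ≠ 0 := by exact_mod_cast hs
      field_simp
      rfl
  have hsqrt : hP.sqrt = W * Matrix.diagonal (RCLike.ofReal ∘ Real.sqrt ∘ d) * Wᴴ := by
    rw [Matrix.PosSemidef.sqrt, Matrix.star_eq_conjTranspose]
  refine ⟨U' * Wᴴ, ?_, ?_⟩
  · rw [Matrix.conjTranspose_mul, Matrix.conjTranspose_conjTranspose]
    calc W * U'ᴴ * (U' * Wᴴ) = W * (U'ᴴ * U') * Wᴴ := by noncomm_ring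
      _ = 1 := by rw [hU'o, mul_one, hWW]
  · rw [hsqrt]
    calc A = A * (W * Wᴴ) := by rw [hWW, mul_one]
      _ = B * Wᴴ := by rw [hBdef]; noncomm_ring
      _ = U' * Matrix.diagonal (RCLike.ofReal ∘ Real.sqrt ∘ d) * Wᴴ := by rw [hBU]
      _ = U' * Wᴴ * (W * Matrix.diagonal (RCLike.ofReal ∘ Real.sqrt ∘ d) * Wᴴ) := by
          have h1 : U' * Wᴴ * (W * Matrix.diagonal (RCLike.ofReal ∘ Real.sqrt ∘ d) * Wᴴ)
              = U' * (Wᴴ * W) * (Matrix.diagonal (RCLike.ofReal ∘ Real.sqrt ∘ d) * Wᴴ) := by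
            noncomm_ring
          rw [h1, hWW', mul_one, ← mul_assoc]

lemma psdSqrt_of_posSemidef {N : ℕ} {A : Matrix (Fin N) (Fin N) ℂ} (h : A.PosSemidef) :
    psdSqrt A = h.sqrt := dif_pos h

/-- **Root fidelity is bounded by the classical Bhattacharyya coefficient**
of the outcome distributions induced by any POVM. -/
theorem rootFidelity_le_bhattacharyya
    {N : ℕ} {C : Type*} [Fintype C]
    (M : C → Matrix (Fin N) (Fin N) ℂ) (hM : IsPOVM M)
    (ρ σ : Matrix (Fin N) (Fin N) ℂ)
    (hρ : IsDensityMatrix ρ) (hσ : IsDensityMatrix σ) :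
    rootFidelity ρ σ ≤
      ∑ c, Real.sqrt ((M c * ρ).trace.re * (M c * σ).trace.re) := by
  
  show (psdSqrt (psdSqrt ρ * σ * psdSqrt ρ)).trace.re ≤
      ∑ c, Real.sqrt ((M c * ρ).trace.re * (M c * σ).trace.re)
  classical
  obtain ⟨hMpsd, hMsum⟩ := hM
  set Rρ : Matrix (Fin N) (Fin N) ℂ := psdSqrt ρ with hRρdef
  set Rσ : Matrix (Fin N) (Fin N) ℂ := psdSqrt σ with hRσdef
  have hRρ : Rρ = hρ.1.sqrt := psdSqrt_of_posSemidef hρ.1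
  have hRσ : Rσ = hσ.1.sqrt := psdSqrt_of_posSemidef hσ.1
  have hRρH : Rρᴴ = Rρ := by rw [hRρ]; exact hρ.1.posSemidef_sqrt.1
  have hRσH : Rσᴴ = Rσ := by rw [hRσ]; exact hσ.1.posSemidef_sqrt.1
  have hRρ2 : Rρ * Rρ = ρ := by rw [hRρ]; exact hρ.1.sqrt_mul_self
  have hRσ2 : Rσ * Rσ = σ := by rw [hRσ]; exact hσ.1.sqrt_mul_self
  set A : Matrix (Fin N) (Fin N) ℂ := Rσ * Rρ with hAdef
  have hAA : Aᴴ * A = Rρ * σ * Rρ := by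
    rw [hAdef, Matrix.conjTranspose_mul, hRρH, hRσH]
    calc Rρ * Rσ * (Rσ * Rρ) = Rρ * (Rσ * Rσ) * Rρ := by noncomm_ring
      _ = Rρ * σ * Rρ := by rw [hRσ2]
  have hfid : psdSqrt (Rρ * σ * Rρ)
      = (Matrix.posSemidef_conjTranspose_mul_self A).sqrt := by
    rw [← hAA]
    exact psdSqrt_of_posSemidef _
  obtain ⟨U, hUU, hpolar⟩ := exists_unitary_polar A
  have hUUH : U * Uᴴ = 1 := mul_eq_one_comm.mp hUU
  have hsqrt_eq : (Matrix.posSemidef_conjTranspose_mul_self A).sqrt = Uᴴ * A := by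
    calc (Matrix.posSemidef_conjTranspose_mul_self A).sqrt
        = (Uᴴ * U) * (Matrix.posSemidef_conjTranspose_mul_self A).sqrt := by
          rw [hUU, one_mul]
      _ = Uᴴ * (U * (Matrix.posSemidef_conjTranspose_mul_self A).sqrt) := by rw [mul_assoc]
      _ = Uᴴ * A := by rw [← hpolar]
  have hexp : Uᴴ * A = ∑ c, Uᴴ * Rσ * M c * Rρ := by
    calc Uᴴ * A = Uᴴ * Rσ * (∑ c, M c) * Rρ := by
          rw [hMsum, hAdef]; noncomm_ring
      _ = ∑ c, Uᴴ * Rσ * M c * Rρ := by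
          rw [Finset.mul_sum, Finset.sum_mul]
  have hterm : ∀ c, (Uᴴ * Rσ * M c * Rρ).trace.re
      ≤ Real.sqrt ((M c * ρ).trace.re * (M c * σ).trace.re) := by
    intro c
    set S : Matrix (Fin N) (Fin N) ℂ := (hMpsd c).sqrt with hSdef
    have hS2 : S * S = M c := (hMpsd c).sqrt_mul_self
    have hSH : Sᴴ = S := (hMpsd c).posSemidef_sqrt.1
    set X : Matrix (Fin N) (Fin N) ℂ := S * Rσ * U with hXdef
    set Y : Matrix (Fin N) (Fin N) ℂ := S * Rρ with hYdef
    have hXY : Xᴴ * Y = Uᴴ * Rσ * M c * Rρ := by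
      rw [hXdef, hYdef, Matrix.conjTranspose_mul, Matrix.conjTranspose_mul, hSH, hRσH]
      calc Uᴴ * (Rσ * S) * (S * Rρ) = Uᴴ * Rσ * (S * S) * Rρ := by noncomm_ring
        _ = Uᴴ * Rσ * M c * Rρ := by rw [hS2]
    have hXX : (Xᴴ * X).trace = (M c * σ).trace := by
      have h1 : Xᴴ * X = Uᴴ * (Rσ * M c * Rσ) * U := by
        rw [hXdef, Matrix.conjTranspose_mul, Matrix.conjTranspose_mul, hSH, hRσH]
        calc Uᴴ * (Rσ * S) * (S * Rσ * U) = Uᴴ * (Rσ * (S * S) * Rσ) * U := by noncomm_ring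
          _ = Uᴴ * (Rσ * M c * Rσ) * U := by rw [hS2]
      rw [h1, Matrix.trace_mul_comm, ← mul_assoc, hUUH, one_mul]
      calc (Rσ * M c * Rσ).trace = (Rσ * (M c * Rσ)).trace := by rw [mul_assoc]
        _ = (M c * Rσ * Rσ).trace := by rw [Matrix.trace_mul_comm, mul_assoc]
        _ = (M c * σ).trace := by rw [mul_assoc, hRσ2]
    have hYY : (Yᴴ * Y).trace = (M c * ρ).trace := by
      have h1 : Yᴴ * Y = Rρ * M c * Rρ := by
        rw [hYdef, Matrix.conjTranspose_mul, hSH, hRρH]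
        calc Rρ * S * (S * Rρ) = Rρ * (S * S) * Rρ := by noncomm_ring
          _ = Rρ * M c * Rρ := by rw [hS2]
      rw [h1]
      calc (Rρ * M c * Rρ).trace = (Rρ * (M c * Rρ)).trace := by rw [mul_assoc]
        _ = (M c * Rρ * Rρ).trace := by rw [Matrix.trace_mul_comm, mul_assoc]
        _ = (M c * ρ).trace := by rw [mul_assoc, hRρ2]
    have hρnn : 0 ≤ (M c * ρ).trace.re := by
      rw [← hYY]; exact trace_conjTranspose_mul_self_re_nonneg Y
    calc (Uᴴ * Rσ * M c * Rρ).trace.re = ((Xᴴ * Y).trace).re := by rw [hXY]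
      _ ≤ Real.sqrt ((Xᴴ * X).trace.re) * Real.sqrt ((Yᴴ * Y).trace.re) :=
          trace_cauchy_schwarz X Y
      _ = Real.sqrt ((M c * σ).trace.re) * Real.sqrt ((M c * ρ).trace.re) := by
          rw [hXX, hYY]
      _ = Real.sqrt ((M c * ρ).trace.re * (M c * σ).trace.re) := by
          rw [Real.sqrt_mul hρnn, mul_comm]
  rw [hfid, hsqrt_eq, hexp, Matrix.trace_sum, Complex.re_sum]
  exact Finset.sum_le_sum (fun c _ => hterm c)
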